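/- Let R and T be rectangles in ℝ^n of the same type, and let S be a rectangle of a different type. Then for any morphisms χ: 𝕀^R → 𝕀^S and ψ: 𝕀^S → 𝕀^T of persistence modules, the composition ψ ∘ χ is zero. -/

import Mathlib

open CategoryTheory Classical

noncomputable section

/-- Convexity of a subset of a poset. -/
def IsConvex {P : Type} [Preorder P] (I : Set P) : Prop :=
  ∀ ⦃p q r : P⦄, p ∈ I → q ∈ I → p ≤ r → r ≤ q → r ∈ I

/-- Zigzag connectivity within a subset. -/
def ZigzagConnected {P : Type} [Preorder P] (I : Set P) : Prop :=
  ∀ p ∈ I, ∀ q ∈ I,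
    Relation.ReflTransGen (fun a b => a ∈ I ∧ b ∈ I ∧ (a ≤ b ∨ b ≤ a)) p q

/-- An interval in a poset: nonempty, convex, and zigzag connected. -/
def IsIntervalSet {P : Type} [Preorder P] (I : Set P) : Prop :=
  I.Nonempty ∧ IsConvex I ∧ ZigzagConnected I

open scoped Classical in
/-- The pointwise vector space of the interval module: `k` (as `⊤`) on `I`, `0` off `I`. -/
def objSub (k : Type) [Field k] {P : Type} [Preorder P] (I : Set P) (p : P) : Submodule k k :=
  if p ∈ I then ⊤ else ⊥

open scoped Classical in
/-- The interval persistence module `𝕀^I` as a functor `P ⥤ ModuleCat k`. -/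
def intervalModule (k : Type) [Field k] {P : Type} [Preorder P] (I : Set P)
    (hI : IsConvex I) : P ⥤ ModuleCat.{0} k where
  obj p := ModuleCat.of k (objSub k I p)
  map {p q} h :=
    if hpq : p ∈ I ∧ q ∈ I then
      ModuleCat.ofHom
        { toFun := fun x => ⟨(x : k), by simp [objSub, hpq.2]⟩
          map_add' := by intros; rfl
          map_smul' := by intros; rfl }
    else 0
  map_id := by
    intro p
    try dsimp only
    by_cases hp : p ∈ I
    · rw [dif_pos ⟨hp, hp⟩]; rfl
    · rw [dif_neg (fun h => hp h.1)]
      haveI : Subsingleton ↥(objSub k I p) := by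
        rw [objSub, if_neg hp]; infer_instance
      apply ModuleCat.hom_ext; apply LinearMap.ext; intro x
      exact this.allEq _ _
  map_comp := by
    intro p q r hpq hqr
    try dsimp only
    by_cases hpr : p ∈ I ∧ r ∈ I
    · have hq : q ∈ I := hI hpr.1 hpr.2 (leOfHom hpq) (leOfHom hqr)
      rw [dif_pos hpr, dif_pos ⟨hpr.1, hq⟩, dif_pos ⟨hq, hpr.2⟩]
      rfl
    · rw [dif_neg hpr]
      by_cases hp : p ∈ I
      · have hr : r ∉ I := fun hr => hpr ⟨hp, hr⟩
        haveI : Subsingleton ↥(objSub k I r) := by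
          rw [objSub, if_neg hr]; infer_instance
        apply ModuleCat.hom_ext; apply LinearMap.ext; intro x
        exact this.allEq _ _
      · haveI : Subsingleton ↥(objSub k I p) := by
          rw [objSub, if_neg hp]; infer_instance
        apply ModuleCat.hom_ext; apply LinearMap.ext; intro x
        have hx : x = 0 := this.allEq x 0
        rw [hx]
        simp

open DirectSum

open scoped ENNReal

/-- Direct sum of a family of persistence modules. -/
def dsumF (k : Type) [Field k] {P : Type} [Preorder P] {ι : Type}
    (F : ι → P ⥤ ModuleCat.{0} k) : P ⥤ ModuleCat.{0} k where
  obj p := ModuleCat.of k (⨁ i, ((F i).obj p : Type))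
  map {p q} h := ModuleCat.ofHom
    (DFinsupp.mapRange.linearMap (fun i => ((F i).map h).hom))
  map_id := by
    intro p
    try dsimp only
    simp only [CategoryTheory.Functor.map_id, ModuleCat.hom_id]
    apply ModuleCat.hom_ext
    exact DFinsupp.mapRange.linearMap_id
  map_comp := by
    intro p q r hpq hqr
    try dsimp only
    simp only [CategoryTheory.Functor.map_comp]
    apply ModuleCat.hom_ext
    apply LinearMap.ext; intro x
    apply DFinsupp.ext; intro i
    rfl

/-- Use the preorder category structure on `Fin n → ℝ`. -/
instance RnCat (n : ℕ) : Category (Fin n → ℝ) := Preorder.smallCategory _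

/-- Diagonal translation by `ε` as an endofunctor of the poset `Fin n → ℝ`. -/
def transl (n : ℕ) (ε : ℝ) : (Fin n → ℝ) ⥤ (Fin n → ℝ) :=
  Monotone.functor (f := fun p i => p i + ε)
    (fun _ _ hab i => add_le_add_left (hab i) ε)

/-- `M` and `N` are `ε`-interleaved `ℝⁿ`-persistence modules. -/
def Interleaved (k : Type) [Field k] {n : ℕ} (ε : ℝ)
    (M N : (Fin n → ℝ) ⥤ ModuleCat.{0} k) : Prop :=
  ∃ _hε : 0 ≤ ε, ∃ (f : M ⟶ transl n ε ⋙ N) (g : N ⟶ transl n ε ⋙ M),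
    (∀ p : Fin n → ℝ, f.app p ≫ g.app (fun i => p i + ε) =
      M.map (homOfLE (show p ≤ fun i => p i + ε + ε from
        fun i => by show p i ≤ p i + ε + ε; linarith))) ∧
    (∀ p : Fin n → ℝ, g.app p ≫ f.app (fun i => p i + ε) =
      N.map (homOfLE (show p ≤ fun i => p i + ε + ε from
        fun i => by show p i ≤ p i + ε + ε; linarith)))

/-- An interval `I ⊆ ℝⁿ` is `δ`-trivial: it contains no pair `p ≤ p + δ`. -/
def SetTrivial {n : ℕ} (δ : ℝ) (I : Set (Fin n → ℝ)) : Prop :=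
  ¬ ∃ p, p ∈ I ∧ (fun i => p i + δ) ∈ I

/-- Barcode data: an indexed family of nonempty convex intervals in `ℝⁿ`. -/
structure Barcode (n : ℕ) where
  ι : Type
  I : ι → Set (Fin n → ℝ)
  nonempty : ∀ i, (I i).Nonempty
  conv : ∀ i, IsConvex (I i)

/-- The interval decomposable module associated to barcode data. -/
def Barcode.module (k : Type) [Field k] {n : ℕ} (B : Barcode n) :
    (Fin n → ℝ) ⥤ ModuleCat.{0} k :=
  dsumF k fun i => intervalModule k (B.I i) (B.conv i)

/-- `B` is pointwise finite dimensional. -/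
def Barcode.pfd (k : Type) [Field k] {n : ℕ} (B : Barcode n) : Prop :=
  ∀ p : Fin n → ℝ, Module.Finite k ((B.module k).obj p)

/-- An `ε`-matching between two barcodes: a partial bijection such that unmatched
intervals are `2ε`-trivial and matched intervals are `ε`-interleaved. -/
def Matched (k : Type) [Field k] {n : ℕ} (ε : ℝ) (B C : Barcode n) : Prop :=
  0 ≤ ε ∧ ∃ (A : Set B.ι) (A' : Set C.ι) (e : A ≃ A'),
    (∀ i ∉ A, SetTrivial (2 * ε) (B.I i)) ∧
    (∀ j ∉ A', SetTrivial (2 * ε) (C.I j)) ∧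
    (∀ i : A, Interleaved k ε
      (intervalModule k (B.I i) (B.conv i))
      (intervalModule k (C.I (e i)) (C.conv (e i))))

/-- The interleaving distance, valued in `ℝ≥0∞`. -/
def dInt (k : Type) [Field k] {n : ℕ} (M N : (Fin n → ℝ) ⥤ ModuleCat.{0} k) : ℝ≥0∞ :=
  ⨅ (ε : ℝ) (_ : Interleaved k ε M N), ENNReal.ofReal ε

/-- The bottleneck distance between barcodes, valued in `ℝ≥0∞`. -/
def dBot (k : Type) [Field k] {n : ℕ} (B C : Barcode n) : ℝ≥0∞ :=
  ⨅ (ε : ℝ) (_ : Matched k ε B C), ENNReal.ofReal ε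

/-- Rectangles: products of real intervals. -/
def rectSet {n : ℕ} (R : Fin n → Set ℝ) : Set (Fin n → ℝ) := {x | ∀ i, x i ∈ R i}

theorem rectSet_convex {n : ℕ} (R : Fin n → Set ℝ) (h : ∀ i, (R i).OrdConnected) :
    IsConvex (rectSet R) := by
  intro p q r hp hq hpr hrq i
  exact (h i).out (hp i) (hq i) ⟨hpr i, hrq i⟩

/-- A barcode consists of rectangles. -/
def IsRectBarcode {n : ℕ} (B : Barcode n) : Prop :=
  ∀ i, ∃ R : Fin n → Set ℝ,
    (∀ j, (R j).Nonempty ∧ (R j).OrdConnected) ∧ B.I i = rectSet R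

/-- Decorated numbers: an extended real endpoint with a decoration,
`false` = `−` (closed side), `true` = `+` (open side), ordered lexicographically
so that `a⁻ < a⁺` and `a^* < b^*` whenever `a < b`. -/
def DecNum := Lex (EReal × Bool)

noncomputable instance : LinearOrder DecNum :=
  inferInstanceAs (LinearOrder (Lex (EReal × Bool)))

open scoped Classical in
/-- The decorated lower endpoint of a subset of `ℝ`. -/
noncomputable def lowDec (I : Set ℝ) : DecNum :=
  toLex (sInf ((↑) '' I : Set EReal),
    if sInf ((↑) '' I : Set EReal) ∈ ((↑) '' I : Set EReal) then false else true)

open scoped Classical in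
/-- The decorated upper endpoint of a subset of `ℝ`. -/
noncomputable def highDec (I : Set ℝ) : DecNum :=
  toLex (sSup ((↑) '' I : Set EReal),
    if sSup ((↑) '' I : Set EReal) ∈ ((↑) '' I : Set EReal) then true else false)

/-- The decorated point `min_R` of a rectangle with factors `R`. -/
noncomputable def minDec {n : ℕ} (R : Fin n → Set ℝ) : Fin n → DecNum :=
  fun i => lowDec (R i)

/-- The decorated point `max_R` of a rectangle with factors `R`. -/
noncomputable def maxDec {n : ℕ} (R : Fin n → Set ℝ) : Fin n → DecNum :=
  fun i => highDec (R i)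

/-- `u` of a decorated number: the underlying real number, `0` for `±∞`. -/
noncomputable def uDec (d : DecNum) : ℝ := (ofLex d).1.toReal

/-- `α` of a rectangle with factors `R`. -/
noncomputable def alphaR {n : ℕ} (R : Fin n → Set ℝ) : ℝ :=
  (∑ i, uDec (minDec R i)) + (∑ i, uDec (maxDec R i))

open scoped Classical in
/-- `P` of a rectangle: the number of endpoint decorations equal to `+`. -/
noncomputable def PR {n : ℕ} (R : Fin n → Set ℝ) : ℕ :=
  (Finset.univ.filter fun i => (ofLex (minDec R i)).2 = true).card +
    (Finset.univ.filter fun i => (ofLex (maxDec R i)).2 = true).card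

/-- The preorder `≤_α` on rectangles. -/
noncomputable def leAlpha {n : ℕ} (R S : Fin n → Set ℝ) : Prop :=
  alphaR R < alphaR S ∨ (alphaR R = alphaR S ∧ PR R ≤ PR S)

/-- Two rectangles are of the same type if all coordinatewise set differences
are bounded. -/
def SameType {n : ℕ} (R S : Fin n → Set ℝ) : Prop :=
  ∀ i, Bornology.IsBounded (R i \ S i) ∧ Bornology.IsBounded (S i \ R i)

/-- `I ⊆ ℝⁿ` is `δ`-significant. -/
def SetSignificant {n : ℕ} (δ : ℝ) (I : Set (Fin n → ℝ)) : Prop :=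
  ∃ p, p ∈ I ∧ (fun i => p i + δ) ∈ I

/-- Rectangle factor data: each factor is a nonempty ordered-connected real interval. -/
def IsRectFactors {n : ℕ} (R : Fin n → Set ℝ) : Prop :=
  ∀ i, (R i).Nonempty ∧ (R i).OrdConnected


section AuxLemmas

variable (k : Type) [Field k] {P : Type} [Preorder P]

lemma objSub_subsing {I : Set P} {p : P} (hp : p ∉ I) : Subsingleton ↥(objSub k I p) := by
  rw [objSub, if_neg hp]; infer_instance

lemma im_map_val {I : Set P} (hI : IsConvex I) {p q : P} (hpq : p ≤ q)
    (hp : p ∈ I) (hq : q ∈ I) (x : ↥(objSub k I p)) :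
    ((((intervalModule k I hI).map (homOfLE hpq)) x) : ↥(objSub k I q)).1 = x.1 := by
  simp only [intervalModule]
  rw [dif_pos (⟨hp, hq⟩ : p ∈ I ∧ q ∈ I)]
  rfl

lemma im_map_zero {I : Set P} (hI : IsConvex I) {p q : P} (hpq : p ≤ q)
    (h : ¬ (p ∈ I ∧ q ∈ I)) :
    ((intervalModule k I hI).map (homOfLE hpq)) = 0 := by
  simp only [intervalModule, dif_neg h]
  rfl

lemma app_up {I J : Set P} {hI : IsConvex I} {hJ : IsConvex J}
    (χ : intervalModule k I hI ⟶ intervalModule k J hJ)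
    {p q : P} (hpq : p ≤ q) (hpJ : p ∈ J) (hqJ : q ∈ J) (hqI : q ∉ I) :
    χ.app p = 0 := by
  have hnat := χ.naturality (homOfLE hpq)
  rw [im_map_zero k hI hpq (fun h => hqI h.2), Limits.zero_comp] at hnat
  apply ModuleCat.hom_ext
  apply LinearMap.ext
  intro x
  have h2 : ((intervalModule k J hJ).map (homOfLE hpq)) (χ.app p x) = 0 := by
    rw [ModuleCat.hom_ext_iff] at hnat
    have this' := LinearMap.congr_fun hnat x
    simp only [ModuleCat.hom_zero, LinearMap.zero_apply, ModuleCat.hom_comp, LinearMap.comp_apply] at this'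
    exact this'.symm
  apply Subtype.ext
  have h3 := im_map_val k hJ hpq hpJ hqJ (χ.app p x)
  rw [h2] at h3
  exact h3.symm

lemma app_down {I J : Set P} {hI : IsConvex I} {hJ : IsConvex J}
    (χ : intervalModule k I hI ⟶ intervalModule k J hJ)
    {p q : P} (hqp : q ≤ p) (hqI : q ∈ I) (hpI : p ∈ I) (hqJ : q ∉ J) :
    χ.app p = 0 := by
  have hnat := χ.naturality (homOfLE hqp)
  apply ModuleCat.hom_ext
  apply LinearMap.ext
  intro x
  have hx : x.1 ∈ objSub k I q := by rw [objSub, if_pos hqI]; trivial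
  set y : ↥(objSub k I q) := ⟨x.1, hx⟩ with hy
  have hmap : ((intervalModule k I hI).map (homOfLE hqp)) y = x := by
    apply Subtype.ext
    exact im_map_val k hI hqp hqI hpI y
  haveI : Subsingleton ↑((intervalModule k J hJ).obj q) := objSub_subsing k hqJ
  have hzero : χ.app q y = 0 := Subsingleton.elim _ _
  rw [ModuleCat.hom_ext_iff] at hnat
  have h2 := LinearMap.congr_fun hnat y
  replace h2 : χ.app p (((intervalModule k I hI).map (homOfLE hqp)) y) =
      ((intervalModule k J hJ).map (homOfLE hqp)) (χ.app q y) := h2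
  rw [hmap, hzero, map_zero] at h2
  rw [ModuleCat.hom_zero, LinearMap.zero_apply]
  exact h2

end AuxLemmas

lemma diff_subset_union_diff {A B C : Set ℝ} : A \ B ⊆ (C \ B) ∪ (A \ C) := by
  intro x hx
  by_cases hc : x ∈ C
  · exact Or.inl ⟨hc, hx.2⟩
  · exact Or.inr ⟨hx.1, hc⟩

/-- If `R` and `T` are rectangles of the same type and `S` is a rectangle
of a different type, then any composition `𝕀^R ⟶ 𝕀^S ⟶ 𝕀^T` is zero. -/
theorem rect_composite_through_other_type_zero
    (k : Type) [Field k] {n : ℕ} (R S T : Fin n → Set ℝ)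
    (hR : IsRectFactors R) (hS : IsRectFactors S) (hT : IsRectFactors T)
    (hRT : SameType R T) (hRS : ¬ SameType R S) (hST : ¬ SameType S T)
    (χ : intervalModule k (rectSet R) (rectSet_convex R fun i => (hR i).2) ⟶
      intervalModule k (rectSet S) (rectSet_convex S fun i => (hS i).2))
    (ψ : intervalModule k (rectSet S) (rectSet_convex S fun i => (hS i).2) ⟶
      intervalModule k (rectSet T) (rectSet_convex T fun i => (hT i).2)) :
    χ ≫ ψ = 0 := by
  classical
  apply NatTrans.ext
  funext p
  rw [NatTrans.comp_app]
  apply ModuleCat.hom_ext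
  apply LinearMap.ext
  intro x
  show (ψ.app p) ((χ.app p) x) = ((0 : intervalModule k (rectSet R)
      (rectSet_convex R fun i => (hR i).2) ⟶ intervalModule k (rectSet T)
      (rectSet_convex T fun i => (hT i).2)).app p) x
  rw [Limits.zero_app]
  show _ = (0 : ↑((intervalModule k (rectSet T) (rectSet_convex T fun i => (hT i).2)).obj p))
  by_cases hpT : p ∈ rectSet T
  case neg =>
    haveI : Subsingleton ↑((intervalModule k (rectSet T)
        (rectSet_convex T fun i => (hT i).2)).obj p) := objSub_subsing k hpT
    exact Subsingleton.elim _ _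
  by_cases hpR : p ∈ rectSet R
  case neg =>
    haveI : Subsingleton ↑((intervalModule k (rectSet R)
        (rectSet_convex R fun i => (hR i).2)).obj p) := objSub_subsing k hpR
    have hx0 : x = 0 := Subsingleton.elim _ _
    rw [hx0, map_zero, map_zero]
  by_cases hpS : p ∈ rectSet S
  case neg =>
    haveI : Subsingleton ↑((intervalModule k (rectSet S)
        (rectSet_convex S fun i => (hS i).2)).obj p) := objSub_subsing k hpS
    have hx0 : (χ.app p) x = 0 := Subsingleton.elim _ _
    rw [hx0, map_zero]
  -- main case: p ∈ R ∩ S ∩ T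
  suffices h : χ.app p = 0 ∨ ψ.app p = 0 by
    have hz : (ψ.app p) ((χ.app p) x) = 0 := by
      rcases h with h | h
      · rw [h]; exact map_zero (ψ.app p).hom
      · rw [h]; rfl
    rw [hz]
  rw [SameType, not_forall] at hRS
  obtain ⟨i, hi⟩ := hRS
  rw [not_and_or] at hi
  rcases hi with hi | hi
  · -- R i \ S i unbounded
    rw [isBounded_iff_bddBelow_bddAbove, not_and_or] at hi
    rcases hi with hi | hi
    · -- unbounded below: q ≤ p, q ∈ R \ S ⇒ χ.app p = 0
      obtain ⟨x0, hx0, hlt⟩ := not_bddBelow_iff.mp hi (p i)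
      set q := Function.update p i x0 with hq
      have hqp : q ≤ p := by
        intro j
        by_cases hj : j = i
        · subst hj; rw [hq, Function.update_self]; exact hlt.le
        · rw [hq, Function.update_of_ne hj]
      have hqR : q ∈ rectSet R := by
        intro j
        by_cases hj : j = i
        · subst hj; rw [hq, Function.update_self]; exact hx0.1
        · rw [hq, Function.update_of_ne hj]; exact hpR j
      have hqS : q ∉ rectSet S := by
        intro h
        have := h i
        rw [hq, Function.update_self] at this
        exact hx0.2 this
      exact Or.inl (app_down k χ hqp hqR hpR hqS)
    · -- unbounded above ⇒ T i \ S i unbounded above ⇒ ψ.app p = 0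
      have hTS : ¬ BddAbove (T i \ S i) := by
        intro hb
        exact hi (((hb.union (hRT i).1.bddAbove)).mono diff_subset_union_diff)
      obtain ⟨x0, hx0, hlt⟩ := not_bddAbove_iff.mp hTS (p i)
      set q := Function.update p i x0 with hq
      have hpq : p ≤ q := by
        intro j
        by_cases hj : j = i
        · subst hj; rw [hq, Function.update_self]; exact hlt.le
        · rw [hq, Function.update_of_ne hj]
      have hqT : q ∈ rectSet T := by
        intro j
        by_cases hj : j = i
        · subst hj; rw [hq, Function.update_self]; exact hx0.1
        · rw [hq, Function.update_of_ne hj]; exact hpT j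
      have hqS : q ∉ rectSet S := by
        intro h
        have := h i
        rw [hq, Function.update_self] at this
        exact hx0.2 this
      exact Or.inr (app_up k ψ hpq hpT hqT hqS)
  · -- S i \ R i unbounded
    rw [isBounded_iff_bddBelow_bddAbove, not_and_or] at hi
    rcases hi with hi | hi
    · -- unbounded below ⇒ S i \ T i unbounded below ⇒ ψ.app p = 0
      have hST2 : ¬ BddBelow (S i \ T i) := by
        intro hb
        exact hi ((((hRT i).2.bddBelow.union hb)).mono diff_subset_union_diff)
      obtain ⟨x0, hx0, hlt⟩ := not_bddBelow_iff.mp hST2 (p i)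
      set q := Function.update p i x0 with hq
      have hqp : q ≤ p := by
        intro j
        by_cases hj : j = i
        · subst hj; rw [hq, Function.update_self]; exact hlt.le
        · rw [hq, Function.update_of_ne hj]
      have hqS : q ∈ rectSet S := by
        intro j
        by_cases hj : j = i
        · subst hj; rw [hq, Function.update_self]; exact hx0.1
        · rw [hq, Function.update_of_ne hj]; exact hpS j
      have hqT : q ∉ rectSet T := by
        intro h
        have := h i
        rw [hq, Function.update_self] at this
        exact hx0.2 this
      exact Or.inr (app_down k ψ hqp hqS hpS hqT)
    · -- unbounded above: q ≥ p, q ∈ S \ R ⇒ χ.app p = 0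
      obtain ⟨x0, hx0, hlt⟩ := not_bddAbove_iff.mp hi (p i)
      set q := Function.update p i x0 with hq
      have hpq : p ≤ q := by
        intro j
        by_cases hj : j = i
        · subst hj; rw [hq, Function.update_self]; exact hlt.le
        · rw [hq, Function.update_of_ne hj]
      have hqS : q ∈ rectSet S := by
        intro j
        by_cases hj : j = i
        · subst hj; rw [hq, Function.update_self]; exact hx0.1
        · rw [hq, Function.update_of_ne hj]; exact hpS j
      have hqR : q ∉ rectSet R := by
        intro h
        have := h i
        rw [hq, Function.update_self] at this
        exact hx0.2 this
      exact Or.inl (app_up k χ hpq hpS hqS hqR)
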